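/- arXiv:0908.0670 — 2 statements merged into one kernel-verified Lean document; each statement's English description precedes it below -/
import Mathlib

section
/- In ℚ⟨x, y⟩ with the shuffle product, for all positive integers p and q one has z_p ш z_q = ∑_{τ=0}^{q-1} C(p-1+τ, τ) z_{p+τ} z_{q-τ} + ∑_{τ=0}^{p-1} C(q-1+τ, τ) z_{q+τ} z_{p-τ}, where z_p = x^{p-1} y. -/
/-- Words in the two letters `x` (encoded `true`) and `y` (encoded `false`). -/
abbrev Word : Type := List Bool

/-- The shuffle product on ℚ⟨x,y⟩, realized as the monoid algebra of words
with values in `Word →₀ ℚ`, defined recursively on words by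
`1 ш w = w ш 1 = w` and `(u₁ w₁) ш (u₂ w₂) = u₁(w₁ ш u₂ w₂) + u₂(u₁ w₁ ш w₂)`. -/
noncomputable def sh : Word → Word → (Word →₀ ℚ)
  | [], w => Finsupp.single w 1
  | (a :: w₁), [] => Finsupp.single (a :: w₁) 1
  | (a :: w₁), (b :: w₂) =>
      Finsupp.mapDomain (a :: ·) (sh w₁ (b :: w₂)) +
      Finsupp.mapDomain (b :: ·) (sh (a :: w₁) w₂)
  termination_by w v => w.length + v.length

/-- The word `z_p = x^{p-1} y`. -/
def zw (p : ℕ) : Word := List.replicate (p - 1) true ++ [false]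

lemma sh_nil (w : Word) : sh [] w = Finsupp.single w 1 := by
  rw [sh]

lemma sh_nil' (w : Word) : sh w [] = Finsupp.single w 1 := by
  cases w <;> rw [sh]

lemma sh_cons_cons (a b : Bool) (w₁ w₂ : Word) :
    sh (a::w₁) (b::w₂) =
      Finsupp.mapDomain (a :: ·) (sh w₁ (b::w₂)) +
      Finsupp.mapDomain (b :: ·) (sh (a::w₁) w₂) := by
  rw [sh]

lemma zw_one : zw 1 = [false] := rfl

lemma zw_succ (k : ℕ) : zw (k+2) = true :: zw (k+1) := by
  simp [zw, List.replicate_succ]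

lemma sh_comm_aux : ∀ n (w v : Word), w.length + v.length ≤ n → sh w v = sh v w := by
  intro n
  induction n with
  | zero => intro w v h; cases w <;> cases v <;> simp_all
  | succ n ih =>
    intro w v h
    match w, v with
    | [], v => rw [sh_nil, sh_nil']
    | (a::w), [] => rw [sh_nil, sh_nil']
    | (a::w), (b::v) =>
      rw [sh_cons_cons, sh_cons_cons, ih w (b::v) (by simp at h ⊢; omega),
        ih (a::w) v (by simp at h ⊢; omega), add_comm]

lemma sh_comm (w v : Word) : sh w v = sh v w := sh_comm_aux _ w v le_rfl

lemma mapDomain_sum_smul (s : Finset ℕ) (c : ℕ → ℚ) (g : ℕ → Word) :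
    Finsupp.mapDomain (true :: ·) (∑ τ ∈ s, c τ • Finsupp.single (g τ) (1:ℚ)) =
      ∑ τ ∈ s, c τ • Finsupp.single (true :: g τ) (1:ℚ) := by
  rw [Finsupp.mapDomain_finset_sum]
  exact Finset.sum_congr rfl fun τ _ => by
    rw [Finsupp.mapDomain_smul, Finsupp.mapDomain_single]

lemma cons_zw_append (m : ℕ) (w : Word) :
    true :: (zw (m+1) ++ w) = zw (m+2) ++ w := by
  rw [zw_succ]; rfl

lemma main0 : ∀ b : ℕ,
    sh (zw (0+1)) (zw (b+1)) =
      (∑ τ ∈ Finset.range (b+1), ((0+τ).choose τ : ℚ) •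
        Finsupp.single (zw (0+1+τ) ++ zw (b+1-τ)) (1:ℚ)) +
      (∑ τ ∈ Finset.range (0+1), ((b+τ).choose τ : ℚ) •
        Finsupp.single (zw (b+1+τ) ++ zw (0+1-τ)) (1:ℚ)) := by
  intro b
  induction b with
  | zero =>
    simp [sh_cons_cons, sh_nil, sh_nil', Finsupp.mapDomain_single, zw_one, zw]
  | succ b ih =>
    have e : zw (b+1+1) = true :: zw (b+1) := zw_succ b
    have e1 : zw (0+1) = false :: [] := rfl
    rw [e1, e, sh_cons_cons, sh_nil, Finsupp.mapDomain_single, ← e1, ← e, ih]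
    rw [Finsupp.mapDomain_add, mapDomain_sum_smul, mapDomain_sum_smul,
      Finset.sum_range_succ' _ (b+1)]
    simp only [Nat.zero_add, Nat.add_zero, Nat.choose_self, Nat.choose_zero_right,
      Nat.cast_one, one_smul, Finset.sum_range_one, Nat.add_sub_cancel]
    have hA : (Finsupp.single (false :: zw (b+1+1)) (1:ℚ)) = Finsupp.single (zw 1 ++ zw (b+1+1-0)) 1 := rfl
    have hC : (Finsupp.single (true :: (zw (b+1) ++ zw (1-0))) (1:ℚ)) = Finsupp.single (zw (b+2) ++ zw (1-0)) 1 := by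
      rw [cons_zw_append b]
    have hB : (∑ x ∈ Finset.range (b+1), Finsupp.single (true :: (zw (1+x) ++ zw (b+1-x))) (1:ℚ))
        = ∑ x ∈ Finset.range (b+1), Finsupp.single (zw (1+(x+1)) ++ zw (b+1+1-(x+1))) (1:ℚ) := by
      refine Finset.sum_congr rfl fun x hx => ?_
      have e2 : (1:ℕ)+x = x+1 := by omega
      have e3 : (1:ℕ)+(x+1) = x+2 := by omega
      have e4 : b+1+1-(x+1) = b+1-x := by omega
      rw [e2, cons_zw_append x, e3, e4]
    rw [hA, hB, hC]
    abel

lemma key (A B : ℕ) (F : ℕ → ℕ → (Word →₀ ℚ)) :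
    ∑ τ ∈ Finset.range (B+2), ((A+1+τ).choose τ : ℚ) • F (A+2+τ) (B+2-τ)
      = (∑ τ ∈ Finset.range (B+2), ((A+τ).choose τ : ℚ) • F (A+2+τ) (B+2-τ))
        + ∑ τ ∈ Finset.range (B+1), ((A+1+τ).choose τ : ℚ) • F (A+3+τ) (B+1-τ) := by
  rw [Finset.sum_range_succ' _ (B+1),
    Finset.sum_range_succ' (fun τ => ((A+τ).choose τ : ℚ) • F (A+2+τ) (B+2-τ)) (B+1)]
  have hsum : (∑ σ ∈ Finset.range (B+1), ((A+1+(σ+1)).choose (σ+1) : ℚ) • F (A+2+(σ+1)) (B+2-(σ+1)))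
      = (∑ σ ∈ Finset.range (B+1), ((A+(σ+1)).choose (σ+1) : ℚ) • F (A+2+(σ+1)) (B+2-(σ+1)))
        + ∑ σ ∈ Finset.range (B+1), ((A+1+σ).choose σ : ℚ) • F (A+3+σ) (B+1-σ) := by
    rw [← Finset.sum_add_distrib]
    refine Finset.sum_congr rfl fun σ hσ => ?_
    have e1 : A+1+(σ+1) = (A+σ+1)+1 := by omega
    have e2 : A+(σ+1) = A+σ+1 := by omega
    have e3 : A+1+σ = A+σ+1 := by omega
    have e4 : A+2+(σ+1) = A+3+σ := by omega
    have e5 : B+2-(σ+1) = B+1-σ := by omega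
    rw [e1, e2, e3, e4, e5, Nat.choose_succ_succ, Nat.cast_add, add_smul, add_comm]
  rw [hsum]
  simp only [Nat.choose_zero_right, Nat.cast_one, one_smul]
  abel

lemma cons_zw_append' (m : ℕ) (hm : 1 ≤ m) (w : Word) :
    true :: (zw m ++ w) = zw (m+1) ++ w := by
  obtain ⟨k, rfl⟩ : ∃ k, m = k+1 := ⟨m-1, by omega⟩
  exact cons_zw_append k w

lemma bump (s : Finset ℕ) (c : ℕ → ℚ) (f g : ℕ → ℕ) (hf : ∀ τ ∈ s, 1 ≤ f τ) :
    ∑ τ ∈ s, c τ • Finsupp.single (true :: (zw (f τ) ++ zw (g τ))) (1:ℚ)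
      = ∑ τ ∈ s, c τ • Finsupp.single (zw (f τ + 1) ++ zw (g τ)) 1 :=
  Finset.sum_congr rfl fun τ hτ => by rw [cons_zw_append' _ (hf τ hτ)]

lemma SS_congr {m m' n n' : ℕ} {c c' : ℚ} (hc : c = c') (hm : m = m') (hn : n = n') :
    c • Finsupp.single (zw m ++ zw n) (1:ℚ) = c' • Finsupp.single (zw m' ++ zw n') 1 := by
  subst hc; subst hm; subst hn; rfl

lemma key' (A B : ℕ) :
    ∑ τ ∈ Finset.range (B+1+1), ((A+1+τ).choose τ : ℚ) • Finsupp.single (zw (A+1+1+τ) ++ zw (B+1+1-τ)) (1:ℚ)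
      = (∑ τ ∈ Finset.range (B+1+1), ((A+τ).choose τ : ℚ) • Finsupp.single (zw (A+1+τ+1) ++ zw (B+1+1-τ)) (1:ℚ))
        + ∑ τ ∈ Finset.range (B+1), ((A+1+τ).choose τ : ℚ) • Finsupp.single (zw (A+1+1+τ+1) ++ zw (B+1-τ)) (1:ℚ) := by
  calc
    ∑ τ ∈ Finset.range (B+1+1), ((A+1+τ).choose τ : ℚ) • Finsupp.single (zw (A+1+1+τ) ++ zw (B+1+1-τ)) (1:ℚ)
        = ∑ τ ∈ Finset.range (B+2), ((A+1+τ).choose τ : ℚ) • Finsupp.single (zw (A+2+τ) ++ zw (B+2-τ)) (1:ℚ) :=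
      Finset.sum_congr rfl fun τ _ => SS_congr rfl (by omega) (by omega)
    _ = (∑ τ ∈ Finset.range (B+2), ((A+τ).choose τ : ℚ) • Finsupp.single (zw (A+2+τ) ++ zw (B+2-τ)) (1:ℚ))
        + ∑ τ ∈ Finset.range (B+1), ((A+1+τ).choose τ : ℚ) • Finsupp.single (zw (A+3+τ) ++ zw (B+1-τ)) (1:ℚ) :=
      key A B (fun m n => Finsupp.single (zw m ++ zw n) (1:ℚ))
    _ = _ := by
      congr 1
      · exact Finset.sum_congr rfl fun τ _ => SS_congr rfl (by omega) (by omega)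
      · exact Finset.sum_congr rfl fun τ _ => SS_congr rfl (by omega) (by omega)

lemma zw_succ' (k : ℕ) : zw (k+1+1) = true :: zw (k+1) := zw_succ k

lemma main : ∀ n a b : ℕ, a + b ≤ n →
    sh (zw (a+1)) (zw (b+1)) =
      (∑ τ ∈ Finset.range (b+1), ((a+τ).choose τ : ℚ) •
        Finsupp.single (zw (a+1+τ) ++ zw (b+1-τ)) (1:ℚ)) +
      (∑ τ ∈ Finset.range (a+1), ((b+τ).choose τ : ℚ) •
        Finsupp.single (zw (b+1+τ) ++ zw (a+1-τ)) (1:ℚ)) := by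
  intro n
  induction n with
  | zero =>
    intro a b h
    have ha : a = 0 := by omega
    have hb : b = 0 := by omega
    subst ha; subst hb
    exact main0 0
  | succ n ih =>
    intro a b h
    match a, b with
    | 0, b => exact main0 b
    | (a'+1), 0 => rw [sh_comm, main0 (a'+1), add_comm]
    | (a'+1), (b'+1) =>
      rw [zw_succ' a', zw_succ' b', sh_cons_cons, ← zw_succ' a', ← zw_succ' b',
        ih a' (b'+1) (by omega), ih (a'+1) b' (by omega),
        Finsupp.mapDomain_add, Finsupp.mapDomain_add,
        mapDomain_sum_smul, mapDomain_sum_smul, mapDomain_sum_smul, mapDomain_sum_smul,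
        bump _ _ _ _ (fun τ _ => by omega), bump _ _ _ _ (fun τ _ => by omega),
        bump _ _ _ _ (fun τ _ => by omega), bump _ _ _ _ (fun τ _ => by omega),
        key' a' b', key' b' a']
      abel


theorem shuffle_zp_zq (p q : ℕ) (hp : 1 ≤ p) (hq : 1 ≤ q) :
    sh (zw p) (zw q) =
      (∑ τ ∈ Finset.range q, (Nat.choose (p - 1 + τ) τ : ℚ) •
        Finsupp.single (zw (p + τ) ++ zw (q - τ)) (1 : ℚ)) +
      (∑ τ ∈ Finset.range p, (Nat.choose (q - 1 + τ) τ : ℚ) •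
        Finsupp.single (zw (q + τ) ++ zw (p - τ)) (1 : ℚ)) := by
  obtain ⟨a, rfl⟩ : ∃ a, p = a + 1 := ⟨p - 1, by omega⟩
  obtain ⟨b, rfl⟩ : ∃ b, q = b + 1 := ⟨q - 1, by omega⟩
  simp only [Nat.add_sub_cancel]
  exact main (a + b) a b le_rfl
end

section
/- For integers p, r ≥ 2 and q ≥ 1, ζ(p)·ζ(r, q) = ∑_{i=0}^{r-1} C(p-1+i, i) ζ(p+i, r-i, q) + ∑_{i=0}^{p-1} C(r-1+i, i) [∑_{τ=0}^{q-1} C(p-i-1+τ, τ) ζ(r+i, p-i+τ, q-τ) + ∑_{τ=0}^{p-i-1} C(q-1+τ, τ) ζ(r+i, q+τ, p-i-τ)]. -/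
/-- The Riemann zeta value `ζ(p) = ∑_{n ≥ 1} n^{-p}`. -/
noncomputable def zeta1 (p : ℕ) : ℝ := ∑' n : ℕ, 1 / ((n : ℝ) + 1) ^ p

/-- The double zeta value `ζ(p, q) = ∑_{m > n > 0} m^{-p} n^{-q}`. -/
noncomputable def zeta2 (p q : ℕ) : ℝ :=
  ∑' (a : ℕ) (b : ℕ), 1 / (((a : ℝ) + (b : ℝ) + 2) ^ p * ((b : ℝ) + 1) ^ q)

/-- The triple zeta value `ζ(k₁, k₂, k₃) = ∑_{m₁ > m₂ > m₃ > 0} ∏ m_j^{-k_j}`. -/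
noncomputable def zeta3 (k₁ k₂ k₃ : ℕ) : ℝ :=
  ∑' (a : ℕ) (b : ℕ) (c : ℕ),
    1 / (((a : ℝ) + (b : ℝ) + (c : ℝ) + 3) ^ k₁ *
         ((b : ℝ) + (c : ℝ) + 2) ^ k₂ * ((c : ℝ) + 1) ^ k₃)

open Finset ENNReal

set_option maxHeartbeats 1000000

lemma pf_one (p : ℕ) (hp : 1 ≤ p) (x y : ℝ) (hx : 0 < x) (hy : 0 < y) :
    1 / (x ^ p * y) = 1 / ((x + y) ^ p * y)
      + ∑ i ∈ range p, 1 / ((x + y) ^ (1 + i) * x ^ (p - i)) := by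
  induction p, hp using Nat.le_induction with
  | base =>
    rw [Finset.sum_range_one]
    have hs : 0 < x + y := by linarith
    field_simp
    ring
  | succ p hp ih =>
    have hs : 0 < x + y := by linarith
    have key : 1 / (x ^ (p+1) * y)
        = 1 / ((x + y) * x ^ (p+1)) + (1/(x+y)) * (1 / (x ^ p * y)) := by
      field_simp
      ring
    rw [key, ih, mul_add, Finset.mul_sum]
    rw [Finset.sum_range_succ']
    have h1 : (1:ℝ)/(x+y) * (1 / ((x + y) ^ p * y)) = 1 / ((x + y) ^ (p+1) * y) := by
      rw [pow_succ]
      field_simp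
    have h2 : ∀ i ∈ range p, (1:ℝ)/(x+y) * (1 / ((x + y) ^ (1 + i) * x ^ (p - i)))
        = 1 / ((x + y) ^ (1 + (i+1)) * x ^ (p + 1 - (i+1))) := by
      intro i hi
      have : (x+y) ^ (1 + (i+1)) = (x+y) * (x+y) ^ (1+i) := by ring
      rw [this, Nat.succ_sub_succ]
      rw [div_mul_div_comm, one_mul, mul_assoc]
    rw [Finset.sum_congr rfl h2]
    have h3 : (x + y) ^ (1 + 0) * x ^ (p + 1 - 0) = (x+y) * x ^ (p+1) := by
      norm_num
    rw [h3, h1]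
    ring


lemma g_step (u v : ℕ) (hu : 2 ≤ u) (hv : 2 ≤ v) (s z : ℝ) (hs : s ≠ 0) (hz : z ≠ 0) :
    ∑ i ∈ range v, ((u - 1 + i).choose i : ℝ) * (1 / (s ^ (u + i) * z ^ (v - i)))
    = (1/s) * ∑ i ∈ range v, ((u - 2 + i).choose i : ℝ) * (1 / (s ^ (u - 1 + i) * z ^ (v - i)))
      + (1/s) * ∑ i ∈ range (v-1), ((u - 1 + i).choose i : ℝ) * (1 / (s ^ (u + i) * z ^ (v - 1 - i))) := by
  obtain ⟨U, rfl⟩ : ∃ U, u = U + 2 := ⟨u - 2, by omega⟩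
  obtain ⟨V, rfl⟩ : ∃ V, v = V + 2 := ⟨v - 2, by omega⟩
  have e1 : U + 2 - 1 = U + 1 := rfl
  have e2 : U + 2 - 2 = U := rfl
  have e3 : V + 2 - 1 = V + 1 := rfl
  rw [e1, e2, e3, Finset.mul_sum, Finset.mul_sum]
  rw [Finset.sum_range_succ' (fun i => ((U + 1 + i).choose i : ℝ) * (1 / (s ^ (U + 2 + i) * z ^ (V + 2 - i)))) (V+1)]
  rw [Finset.sum_range_succ' (fun i => (1/s) * (((U + i).choose i : ℝ) * (1 / (s ^ (U + 1 + i) * z ^ (V + 2 - i))))) (V+1)]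
  simp only [add_zero, Nat.sub_zero]
  have hAB : ∑ k ∈ range (V + 1), ((U + 1 + (k + 1)).choose (k + 1) : ℝ) *
        (1 / (s ^ (U + 2 + (k + 1)) * z ^ (V + 2 - (k + 1))))
      = ∑ k ∈ range (V + 1), ((1/s) * (((U + (k + 1)).choose (k + 1) : ℝ) *
          (1 / (s ^ (U + 1 + (k + 1)) * z ^ (V + 2 - (k + 1)))))
        + (1/s) * (((U + 1 + k).choose k : ℝ) * (1 / (s ^ (U + 2 + k) * z ^ (V + 1 - k))))) := by
    apply Finset.sum_congr rfl
    intro i _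
    have hc : ((U + 1 + (i+1)).choose (i+1) : ℝ)
        = ((U + i + 1).choose i : ℝ) + ((U + i + 1).choose (i+1) : ℝ) := by
      have := Nat.choose_succ_succ (U + i + 1) i
      have h2 : U + 1 + (i+1) = U + i + 1 + 1 := by omega
      rw [h2]
      exact_mod_cast this
    have hsub : V + 2 - (i+1) = V + 1 - i := by omega
    have hc2 : U + (i+1) = U + i + 1 := by omega
    have hc3 : U + 1 + i = U + i + 1 := by omega
    have hp1 : s ^ (U + 2 + (i+1)) = s * s ^ (U + 2 + i) := by
      rw [show U + 2 + (i+1) = (U + 2 + i) + 1 from by omega, pow_succ']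
    have hp2 : U + 1 + (i+1) = U + 2 + i := by omega
    rw [hsub, hc, hc2, hc3, hp1, hp2]
    field_simp
    ring
  rw [hAB, Finset.sum_add_distrib]
  have hB : ((U + 1).choose 0 : ℝ) * (1 / (s ^ (U + 2) * z ^ (V + 2)))
      = (1/s) * (((U + 0).choose 0 : ℝ) * (1 / (s ^ (U + 1) * z ^ (V + 2)))) := by
    simp only [Nat.choose_zero_right, Nat.cast_one, one_mul]
    have hp : s ^ (U + 2) = s * s ^ (U + 1) := by rw [← pow_succ']
    rw [hp]
    field_simp
  rw [hB]
  exact add_right_comm _ _ _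

lemma pf_aux : ∀ n p r : ℕ, p + r ≤ n → 1 ≤ p → 1 ≤ r → ∀ x y : ℝ, 0 < x → 0 < y →
    1 / (x ^ p * y ^ r) =
      (∑ i ∈ range r, ((p - 1 + i).choose i : ℝ) * (1 / ((x + y) ^ (p + i) * y ^ (r - i))))
      + ∑ i ∈ range p, ((r - 1 + i).choose i : ℝ) * (1 / ((x + y) ^ (r + i) * x ^ (p - i))) := by
  intro n
  induction n with
  | zero => intro p r h hp hr; omega
  | succ n ih =>
    intro p r h hp hr x y hx hy
    rcases eq_or_lt_of_le hp with hp1 | hp2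
    · -- p = 1
      rw [← hp1]
      rw [Finset.sum_range_one]
      simp only [add_zero, Nat.sub_zero, Nat.choose_zero_right, Nat.cast_one, one_mul,
        pow_one, Nat.sub_self, zero_add, Nat.choose_self]
      have h1 := pf_one r hr y x hy hx
      rw [add_comm y x] at h1
      rw [mul_comm x (y ^ r), h1]
      ring
    · rcases eq_or_lt_of_le hr with hr1 | hr2
      · -- r = 1
        rw [← hr1]
        rw [Finset.sum_range_one]
        simp only [add_zero, Nat.sub_zero, Nat.choose_zero_right, Nat.cast_one, one_mul,
          pow_one, Nat.sub_self, zero_add, Nat.choose_self]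
        exact pf_one p hp x y hx hy
      · -- 2 ≤ p, 2 ≤ r
        have hs : 0 < x + y := by linarith
        have key : 1 / (x ^ p * y ^ r)
            = (1/(x+y)) * (1 / (x ^ (p-1) * y ^ r)) + (1/(x+y)) * (1 / (x ^ p * y ^ (r-1))) := by
          have e1 : x ^ p = x ^ (p-1) * x := by
            rw [← pow_succ]; congr 1; omega
          have e2 : y ^ r = y ^ (r-1) * y := by
            rw [← pow_succ]; congr 1; omega
          rw [e1, e2]
          field_simp
        rw [key, ih (p-1) r (by omega) (by omega) hr x y hx hy,
          ih p (r-1) (by omega) hp (by omega) x y hx hy]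
        rw [g_step p r hp2 hr2 (x+y) y (by positivity) (by positivity),
          g_step r p hr2 hp2 (x+y) x (by positivity) (by positivity)]
        simp only [show p - 2 = p - 1 - 1 from by omega, show r - 2 = r - 1 - 1 from by omega]
        ring

/-- Final real partial fraction lemma. -/
lemma pf_real (p r : ℕ) (hp : 1 ≤ p) (hr : 1 ≤ r) (x y : ℝ) (hx : 0 < x) (hy : 0 < y) :
    1 / (x ^ p * y ^ r) =
      (∑ i ∈ range r, ((p - 1 + i).choose i : ℝ) * (1 / ((x + y) ^ (p + i) * y ^ (r - i))))
      + ∑ i ∈ range p, ((r - 1 + i).choose i : ℝ) * (1 / ((x + y) ^ (r + i) * x ^ (p - i))) :=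
  pf_aux (p + r) p r le_rfl hp hr x y hx hy

lemma ofReal_inv_mul (x y : ℝ) (k l : ℕ) (hx : 0 < x) (hy : 0 < y) :
    ENNReal.ofReal (1/(x^k * y^l)) = ((ENNReal.ofReal x)^k)⁻¹ * ((ENNReal.ofReal y)^l)⁻¹ := by
  rw [one_div, ENNReal.ofReal_inv_of_pos (by positivity), ENNReal.ofReal_mul (by positivity),
    ENNReal.ofReal_pow hx.le, ENNReal.ofReal_pow hy.le,
    ENNReal.mul_inv (Or.inr (pow_ne_top ofReal_ne_top)) (Or.inl (pow_ne_top ofReal_ne_top))]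

lemma pf_cast (p r : ℕ) (hp : 1 ≤ p) (hr : 1 ≤ r) (X Y : ℕ) (hX : 1 ≤ X) (hY : 1 ≤ Y) :
    ((X:ℝ≥0∞)^p)⁻¹ * ((Y:ℝ≥0∞)^r)⁻¹ =
      (∑ i ∈ range r, ((p-1+i).choose i : ℝ≥0∞) * ((((X:ℝ≥0∞)+(Y:ℝ≥0∞))^(p+i))⁻¹ * ((Y:ℝ≥0∞)^(r-i))⁻¹))
      + ∑ i ∈ range p, ((r-1+i).choose i : ℝ≥0∞) * ((((X:ℝ≥0∞)+(Y:ℝ≥0∞))^(r+i))⁻¹ * ((X:ℝ≥0∞)^(p-i))⁻¹) := by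
  have hX' : (0:ℝ) < (X:ℝ) := by exact_mod_cast hX
  have hY' : (0:ℝ) < (Y:ℝ) := by exact_mod_cast hY
  have hXY' : (0:ℝ) < (X:ℝ) + (Y:ℝ) := by linarith
  have h := congrArg ENNReal.ofReal (pf_real p r hp hr (X:ℝ) (Y:ℝ) hX' hY')
  rw [ofReal_inv_mul _ _ _ _ hX' hY', ENNReal.ofReal_natCast, ENNReal.ofReal_natCast] at h
  rw [h, ENNReal.ofReal_add (by positivity) (by positivity)]
  congr 1
  · rw [ENNReal.ofReal_sum_of_nonneg (fun i _ => by positivity)]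
    apply Finset.sum_congr rfl
    intro i _
    rw [ENNReal.ofReal_mul (by positivity), ofReal_inv_mul _ _ _ _ hXY' hY',
      ENNReal.ofReal_natCast, ENNReal.ofReal_add hX'.le hY'.le,
      ENNReal.ofReal_natCast, ENNReal.ofReal_natCast]
  · rw [ENNReal.ofReal_sum_of_nonneg (fun i _ => by positivity)]
    apply Finset.sum_congr rfl
    intro i _
    rw [ENNReal.ofReal_mul (by positivity), ofReal_inv_mul _ _ _ _ hXY' hX',
      ENNReal.ofReal_natCast, ENNReal.ofReal_add hX'.le hY'.le,
      ENNReal.ofReal_natCast, ENNReal.ofReal_natCast]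

lemma real_partial_bound (M n : ℕ) :
    ∑ a ∈ range n, 1/(((a:ℝ)+M+2)^2) ≤ 1/((M:ℝ)+1) := by
  have key : ∀ a ∈ range n, 1/(((a:ℝ)+M+2)^2)
      ≤ 1/((a:ℝ)+M+1) - 1/((a:ℝ)+(M:ℝ)+2) := by
    intro a _
    have h0 : (0:ℝ) < (a:ℝ)+M+1 := by positivity
    have h1 : (0:ℝ) < (a:ℝ)+M+2 := by positivity
    have hsub : 1/((a:ℝ)+M+1) - 1/((a:ℝ)+M+2) = 1/(((a:ℝ)+M+1) * ((a:ℝ)+M+2)) := by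
      field_simp
      ring
    rw [hsub]
    apply one_div_le_one_div_of_le (by positivity)
    nlinarith
  calc ∑ a ∈ range n, 1/(((a:ℝ)+M+2)^2)
      ≤ ∑ a ∈ range n, (1/((a:ℝ)+M+1) - 1/((a:ℝ)+M+2)) := Finset.sum_le_sum key
    _ = ∑ a ∈ range n, (1/((a:ℝ)+M+1) - 1/(((a+1:ℕ):ℝ)+M+1)) := by
        apply Finset.sum_congr rfl
        intro a _
        push_cast
        ring
    _ = 1/((0:ℝ)+M+1) - 1/((n:ℝ)+M+1) := by
        rw [Finset.sum_range_sub' (fun a => 1/((a:ℝ)+M+1))]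
        norm_num
    _ ≤ 1/((M:ℝ)+1) := by
        have h2 : (0:ℝ) ≤ 1/((n:ℝ)+M+1) := by positivity
        have h3 : (0:ℝ)+(M:ℝ)+1 = (M:ℝ)+1 := by ring
        rw [h3]
        linarith

lemma cast_add_eq (a M : ℕ) : ((a:ℝ≥0∞)+M+2) = ENNReal.ofReal ((a:ℝ)+M+2) := by
  rw [ENNReal.ofReal_add (by positivity) (by norm_num), ENNReal.ofReal_add (by positivity) (by norm_num)]
  norm_num

lemma tsum_sq_bound (M : ℕ) :
    ∑' a:ℕ, (((a:ℝ≥0∞) + M + 2)^2)⁻¹ ≤ ((M:ℝ≥0∞)+1)⁻¹ := by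
  rw [ENNReal.tsum_eq_iSup_sum]
  apply iSup_le
  intro s
  obtain ⟨n, hn⟩ := Finset.exists_nat_subset_range s
  calc ∑ a ∈ s, (((a:ℝ≥0∞) + M + 2)^2)⁻¹
      ≤ ∑ a ∈ range n, (((a:ℝ≥0∞) + M + 2)^2)⁻¹ :=
        Finset.sum_le_sum_of_subset hn
    _ = ∑ a ∈ range n, ENNReal.ofReal (1/(((a:ℝ)+M+2)^2)) := by
        apply Finset.sum_congr rfl
        intro a _
        rw [cast_add_eq, one_div, ← ENNReal.ofReal_pow (by positivity),
          ENNReal.ofReal_inv_of_pos (by positivity)]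
    _ = ENNReal.ofReal (∑ a ∈ range n, 1/(((a:ℝ)+M+2)^2)) :=
        (ENNReal.ofReal_sum_of_nonneg (fun i _ => by positivity)).symm
    _ ≤ ENNReal.ofReal (1/((M:ℝ)+1)) := ENNReal.ofReal_le_ofReal (real_partial_bound M n)
    _ = ((M:ℝ≥0∞)+1)⁻¹ := by
        rw [one_div, ENNReal.ofReal_inv_of_pos (by positivity), ENNReal.ofReal_add (by positivity) (by norm_num)]
        norm_num

lemma tsum_one_sq : ∑' a:ℕ, (((a:ℝ≥0∞) + 1)^2)⁻¹ ≤ 2 := by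
  rw [tsum_eq_zero_add' ENNReal.summable]
  have h : ∑' a:ℕ, ((((a:ℕ):ℝ≥0∞) + 2)^2)⁻¹ ≤ 1 := by
    have := tsum_sq_bound 0
    simpa using this
  calc ((((0:ℕ):ℝ≥0∞)+1)^2)⁻¹ + ∑' a:ℕ, ((((a+1:ℕ):ℝ≥0∞) + 1)^2)⁻¹
      ≤ 1 + 1 := by
        apply add_le_add
        · norm_num
        · refine le_trans (le_of_eq ?_) h
          apply tsum_congr
          intro a
          have : ((a+1:ℕ):ℝ≥0∞) + 1 = (a:ℝ≥0∞) + 2 := by push_cast; ring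
          rw [this]
    _ = 2 := by norm_num

noncomputable def Z1 (p : ℕ) : ℝ≥0∞ := ∑' n:ℕ, (((n:ℝ≥0∞)+1)^p)⁻¹
noncomputable def Z2 (r q : ℕ) : ℝ≥0∞ :=
  ∑' (a:ℕ) (b:ℕ), (((a:ℝ≥0∞)+(b:ℝ≥0∞)+2)^r)⁻¹ * (((b:ℝ≥0∞)+1)^q)⁻¹
noncomputable def Z3 (k₁ k₂ k₃ : ℕ) : ℝ≥0∞ :=
  ∑' (a:ℕ) (b:ℕ) (c:ℕ), (((a:ℝ≥0∞)+(b:ℝ≥0∞)+(c:ℝ≥0∞)+3)^k₁)⁻¹ *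
    (((b:ℝ≥0∞)+(c:ℝ≥0∞)+2)^k₂)⁻¹ * (((c:ℝ≥0∞)+1)^k₃)⁻¹

lemma inv_pow_le (x : ℝ≥0∞) (hx : 1 ≤ x) {j k : ℕ} (h : j ≤ k) : (x^k)⁻¹ ≤ (x^j)⁻¹ :=
  ENNReal.inv_le_inv.2 (pow_le_pow_right₀ hx h)

lemma inv_sq_merge (x : ℝ≥0∞) (hx : x ≠ 0) : x⁻¹ * x⁻¹ = (x^2)⁻¹ := by
  rw [sq, ENNReal.mul_inv (Or.inl hx) (Or.inr hx)]

lemma Z1_le_two (p : ℕ) (hp : 2 ≤ p) : Z1 p ≤ 2 := by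
  refine le_trans (ENNReal.tsum_le_tsum fun n => ?_) tsum_one_sq
  exact inv_pow_le _ (le_add_left le_rfl) hp

lemma Z2_le_two (r q : ℕ) (hr : 2 ≤ r) (hq : 1 ≤ q) : Z2 r q ≤ 2 := by
  have step1 : Z2 r q ≤ ∑' (a:ℕ) (b:ℕ), (((a:ℝ≥0∞)+(b:ℝ≥0∞)+2)^2)⁻¹ * ((b:ℝ≥0∞)+1)⁻¹ := by
    unfold Z2
    refine ENNReal.tsum_le_tsum fun a => ?_
    refine ENNReal.tsum_le_tsum fun b => ?_
    have h1 : (((a:ℝ≥0∞)+(b:ℝ≥0∞)+2)^r)⁻¹ ≤ (((a:ℝ≥0∞)+(b:ℝ≥0∞)+2)^2)⁻¹ :=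
      inv_pow_le _ (le_add_left one_le_two) hr
    have h2 : (((b:ℝ≥0∞)+1)^q)⁻¹ ≤ ((b:ℝ≥0∞)+1)⁻¹ := by
      have := inv_pow_le ((b:ℝ≥0∞)+1) (le_add_left le_rfl) hq
      simpa using this
    exact mul_le_mul' h1 h2
  refine le_trans step1 ?_
  rw [ENNReal.tsum_comm]
  have step2 : ∀ b:ℕ, (∑' a:ℕ, (((a:ℝ≥0∞)+(b:ℝ≥0∞)+2)^2)⁻¹ * ((b:ℝ≥0∞)+1)⁻¹)
      ≤ (((b:ℝ≥0∞)+1)^2)⁻¹ := by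
    intro b
    rw [ENNReal.tsum_mul_right]
    refine le_trans (mul_le_mul_left (tsum_sq_bound b) _) ?_
    rw [inv_sq_merge _ (by simp)]
  refine le_trans (ENNReal.tsum_le_tsum step2) tsum_one_sq

lemma Z3_le_two (k₁ k₂ k₃ : ℕ) (h1 : 2 ≤ k₁) (h2 : 1 ≤ k₂) (h3 : 1 ≤ k₃) :
    Z3 k₁ k₂ k₃ ≤ 2 := by
  have step1 : Z3 k₁ k₂ k₃ ≤ ∑' (a:ℕ) (b:ℕ) (c:ℕ),
      (((a:ℝ≥0∞)+(b:ℝ≥0∞)+(c:ℝ≥0∞)+3)^2)⁻¹ * (((b:ℝ≥0∞)+(c:ℝ≥0∞)+2)⁻¹ * ((c:ℝ≥0∞)+1)⁻¹) := by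
    unfold Z3
    refine ENNReal.tsum_le_tsum fun a => ?_
    refine ENNReal.tsum_le_tsum fun b => ?_
    refine ENNReal.tsum_le_tsum fun c => ?_
    have ha : (((a:ℝ≥0∞)+(b:ℝ≥0∞)+(c:ℝ≥0∞)+3)^k₁)⁻¹ ≤ (((a:ℝ≥0∞)+(b:ℝ≥0∞)+(c:ℝ≥0∞)+3)^2)⁻¹ :=
      inv_pow_le _ (le_add_left (by norm_num : (1:ℝ≥0∞) ≤ 3)) h1
    have hb : (((b:ℝ≥0∞)+(c:ℝ≥0∞)+2)^k₂)⁻¹ ≤ ((b:ℝ≥0∞)+(c:ℝ≥0∞)+2)⁻¹ := by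
      have := inv_pow_le ((b:ℝ≥0∞)+(c:ℝ≥0∞)+2) (le_add_left one_le_two) h2
      simpa using this
    have hc : (((c:ℝ≥0∞)+1)^k₃)⁻¹ ≤ ((c:ℝ≥0∞)+1)⁻¹ := by
      have := inv_pow_le ((c:ℝ≥0∞)+1) (le_add_left le_rfl) h3
      simpa using this
    calc (((a:ℝ≥0∞)+(b:ℝ≥0∞)+(c:ℝ≥0∞)+3)^k₁)⁻¹ * (((b:ℝ≥0∞)+(c:ℝ≥0∞)+2)^k₂)⁻¹ * (((c:ℝ≥0∞)+1)^k₃)⁻¹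
        ≤ (((a:ℝ≥0∞)+(b:ℝ≥0∞)+(c:ℝ≥0∞)+3)^2)⁻¹ * ((b:ℝ≥0∞)+(c:ℝ≥0∞)+2)⁻¹ * ((c:ℝ≥0∞)+1)⁻¹ :=
          mul_le_mul' (mul_le_mul' ha hb) hc
      _ = (((a:ℝ≥0∞)+(b:ℝ≥0∞)+(c:ℝ≥0∞)+3)^2)⁻¹ * (((b:ℝ≥0∞)+(c:ℝ≥0∞)+2)⁻¹ * ((c:ℝ≥0∞)+1)⁻¹) := by
          ring
  refine le_trans step1 ?_
  rw [ENNReal.tsum_comm]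
  have swap2 : ∀ b:ℕ, (∑' (a:ℕ) (c:ℕ),
      (((a:ℝ≥0∞)+(b:ℝ≥0∞)+(c:ℝ≥0∞)+3)^2)⁻¹ * (((b:ℝ≥0∞)+(c:ℝ≥0∞)+2)⁻¹ * ((c:ℝ≥0∞)+1)⁻¹))
      = ∑' (c:ℕ) (a:ℕ),
      (((a:ℝ≥0∞)+(b:ℝ≥0∞)+(c:ℝ≥0∞)+3)^2)⁻¹ * (((b:ℝ≥0∞)+(c:ℝ≥0∞)+2)⁻¹ * ((c:ℝ≥0∞)+1)⁻¹) := by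
    intro b
    exact ENNReal.tsum_comm
  rw [tsum_congr swap2, ENNReal.tsum_comm]
  -- now ∑' c, ∑' b, ∑' a
  have step2 : ∀ c b : ℕ, (∑' a:ℕ,
      (((a:ℝ≥0∞)+(b:ℝ≥0∞)+(c:ℝ≥0∞)+3)^2)⁻¹ * (((b:ℝ≥0∞)+(c:ℝ≥0∞)+2)⁻¹ * ((c:ℝ≥0∞)+1)⁻¹))
      ≤ (((b:ℝ≥0∞)+(c:ℝ≥0∞)+2)^2)⁻¹ * ((c:ℝ≥0∞)+1)⁻¹ := by
    intro c b
    rw [ENNReal.tsum_mul_right]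
    have hb : (∑' a:ℕ, (((a:ℝ≥0∞)+(b:ℝ≥0∞)+(c:ℝ≥0∞)+3)^2)⁻¹) ≤ ((b:ℝ≥0∞)+(c:ℝ≥0∞)+2)⁻¹ := by
      have key := tsum_sq_bound (b+c+1)
      have hcast : ∀ a:ℕ, ((a:ℝ≥0∞) + ((b+c+1 : ℕ):ℝ≥0∞) + 2) = ((a:ℝ≥0∞)+(b:ℝ≥0∞)+(c:ℝ≥0∞)+3) := by
        intro a; push_cast; ring
      rw [tsum_congr (fun a => by rw [hcast a])] at key
      refine le_trans key ?_
      apply le_of_eq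
      push_cast
      ring
    refine le_trans (mul_le_mul_left hb _) ?_
    rw [← mul_assoc, inv_sq_merge _ (by simp)]
  refine le_trans (ENNReal.tsum_le_tsum (fun c => ENNReal.tsum_le_tsum (step2 c))) ?_
  have step3 : ∀ c:ℕ, (∑' b:ℕ, (((b:ℝ≥0∞)+(c:ℝ≥0∞)+2)^2)⁻¹ * ((c:ℝ≥0∞)+1)⁻¹)
      ≤ (((c:ℝ≥0∞)+1)^2)⁻¹ := by
    intro c
    rw [ENNReal.tsum_mul_right]
    refine le_trans (mul_le_mul_left (tsum_sq_bound c) _) ?_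
    rw [inv_sq_merge _ (by simp)]
  exact le_trans (ENNReal.tsum_le_tsum step3) tsum_one_sq

noncomputable def e (k X : ℕ) : ℝ≥0∞ := ((X:ℝ≥0∞)^k)⁻¹
noncomputable def W (k₁ k₂ k₃ : ℕ) : ℝ≥0∞ :=
  ∑' (a:ℕ) (b:ℕ) (c:ℕ), e k₁ (a+b+c+3) * (e k₂ (b+c+2) * e k₃ (c+1))

lemma pf_e (p r : ℕ) (hp : 1 ≤ p) (hr : 1 ≤ r) (X Y : ℕ) (hX : 1 ≤ X) (hY : 1 ≤ Y) :
    e p X * e r Y =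
      (∑ i ∈ range r, ((p-1+i).choose i : ℝ≥0∞) * (e (p+i) (X+Y) * e (r-i) Y))
      + ∑ i ∈ range p, ((r-1+i).choose i : ℝ≥0∞) * (e (r+i) (X+Y) * e (p-i) X) := by
  have h := pf_cast p r hp hr X Y hX hY
  simp only [e, Nat.cast_add]
  exact h

lemma tsum3_finsum (s : Finset ℕ) (f : ℕ → ℕ → ℕ → ℕ → ℝ≥0∞) :
    ∑' (n:ℕ) (a:ℕ) (b:ℕ), ∑ i ∈ s, f i n a b
      = ∑ i ∈ s, ∑' (n:ℕ) (a:ℕ) (b:ℕ), f i n a b := by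
  calc ∑' (n:ℕ) (a:ℕ) (b:ℕ), ∑ i ∈ s, f i n a b
      = ∑' (n:ℕ) (a:ℕ), ∑ i ∈ s, ∑' (b:ℕ), f i n a b :=
        tsum_congr fun n => tsum_congr fun a => Summable.tsum_finsetSum fun i _ => ENNReal.summable
    _ = ∑' (n:ℕ), ∑ i ∈ s, ∑' (a:ℕ) (b:ℕ), f i n a b :=
        tsum_congr fun n => Summable.tsum_finsetSum fun i _ => ENNReal.summable
    _ = ∑ i ∈ s, ∑' (n:ℕ) (a:ℕ) (b:ℕ), f i n a b :=
        Summable.tsum_finsetSum fun i _ => ENNReal.summable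

lemma tsum3_const_mul (c : ℝ≥0∞) (g : ℕ → ℕ → ℕ → ℝ≥0∞) :
    ∑' (n:ℕ) (a:ℕ) (b:ℕ), c * g n a b = c * ∑' (n:ℕ) (a:ℕ) (b:ℕ), g n a b := by
  calc ∑' (n:ℕ) (a:ℕ) (b:ℕ), c * g n a b
      = ∑' (n:ℕ) (a:ℕ), c * ∑' (b:ℕ), g n a b :=
        tsum_congr fun n => tsum_congr fun a => ENNReal.tsum_mul_left
    _ = ∑' (n:ℕ), c * ∑' (a:ℕ) (b:ℕ), g n a b :=
        tsum_congr fun n => ENNReal.tsum_mul_left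
    _ = c * ∑' (n:ℕ) (a:ℕ) (b:ℕ), g n a b := ENNReal.tsum_mul_left

lemma tsum3_add (f g : ℕ → ℕ → ℕ → ℝ≥0∞) :
    ∑' (n:ℕ) (a:ℕ) (b:ℕ), (f n a b + g n a b)
      = (∑' (n:ℕ) (a:ℕ) (b:ℕ), f n a b) + ∑' (n:ℕ) (a:ℕ) (b:ℕ), g n a b := by
  calc ∑' (n:ℕ) (a:ℕ) (b:ℕ), (f n a b + g n a b)
      = ∑' (n:ℕ) (a:ℕ), ((∑' (b:ℕ), f n a b) + ∑' (b:ℕ), g n a b) :=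
        tsum_congr fun n => tsum_congr fun a => ENNReal.tsum_add
    _ = ∑' (n:ℕ), ((∑' (a:ℕ) (b:ℕ), f n a b) + ∑' (a:ℕ) (b:ℕ), g n a b) :=
        tsum_congr fun n => ENNReal.tsum_add
    _ = _ := ENNReal.tsum_add

lemma tsum3_swap12 (g : ℕ → ℕ → ℕ → ℝ≥0∞) :
    ∑' (n:ℕ) (a:ℕ) (b:ℕ), g n a b = ∑' (a:ℕ) (n:ℕ) (b:ℕ), g n a b :=
  ENNReal.tsum_comm

lemma tsum3_cycle (g : ℕ → ℕ → ℕ → ℝ≥0∞) :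
    ∑' (n:ℕ) (a:ℕ) (b:ℕ), g n a b = ∑' (a:ℕ) (b:ℕ) (n:ℕ), g n a b := by
  rw [tsum3_swap12]
  exact tsum_congr fun a => ENNReal.tsum_comm

lemma main_Z (p r q : ℕ) (hp : 2 ≤ p) (hr : 2 ≤ r) (hq : 1 ≤ q) :
    Z1 p * Z2 r q =
      (∑ i ∈ range r, ((p-1+i).choose i : ℝ≥0∞) * W (p+i) (r-i) q)
      + ∑ i ∈ range p, ((r-1+i).choose i : ℝ≥0∞) *
          ((∑ τ ∈ range q, ((p-i-1+τ).choose τ : ℝ≥0∞) * W (r+i) (p-i+τ) (q-τ))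
           + ∑ τ ∈ range (p-i), ((q-1+τ).choose τ : ℝ≥0∞) * W (r+i) (q+τ) (p-i-τ)) := by
  have hp1 : 1 ≤ p := by omega
  have hr1 : 1 ≤ r := by omega
  -- Step 0: product to triple sum
  have h0 : Z1 p * Z2 r q = ∑' (n:ℕ) (a:ℕ) (b:ℕ), e p (n+1) * (e r (a+b+2) * e q (b+1)) := by
    rw [Z1, Z2, ← ENNReal.tsum_mul_right]
    refine tsum_congr fun n => ?_
    rw [← ENNReal.tsum_mul_left]
    refine tsum_congr fun a => ?_
    rw [← ENNReal.tsum_mul_left]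
    refine tsum_congr fun b => ?_
    simp only [e]
    push_cast
    ring
  -- Step 1: first partial fraction
  have h1 : ∀ n a b : ℕ, e p (n+1) * (e r (a+b+2) * e q (b+1))
      = (∑ i ∈ range r, ((p-1+i).choose i : ℝ≥0∞) * (e (p+i) (n+a+b+3) * (e (r-i) (a+b+2) * e q (b+1))))
        + ∑ i ∈ range p, ((r-1+i).choose i : ℝ≥0∞) * (e (r+i) (n+a+b+3) * (e (p-i) (n+1) * e q (b+1))) := by
    intro n a b
    rw [← mul_assoc, pf_e p r hp1 hr1 (n+1) (a+b+2) (by omega) (by omega)]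
    rw [show n+1+(a+b+2) = n+a+b+3 from by omega]
    rw [add_mul, Finset.sum_mul, Finset.sum_mul]
    congr 1
    · exact Finset.sum_congr rfl fun i _ => by ring
    · exact Finset.sum_congr rfl fun i _ => by ring
  rw [h0, tsum_congr fun n => tsum_congr fun a => tsum_congr fun b => h1 n a b]
  rw [tsum3_add, tsum3_finsum, tsum3_finsum]
  congr 1
  · -- first family
    refine Finset.sum_congr rfl fun i _ => ?_
    rw [tsum3_const_mul]
    rfl
  · -- second + third family
    refine Finset.sum_congr rfl fun i hi => ?_
    have hi' : i < p := Finset.mem_range.1 hi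
    rw [tsum3_const_mul]
    congr 1
    -- now: ∑' n a b, e (r+i) (n+a+b+3) * (e (p-i) (n+1) * e q (b+1)) = inner RHS
    have h2 : ∀ n a b : ℕ, e (r+i) (n+a+b+3) * (e (p-i) (n+1) * e q (b+1))
        = (∑ τ ∈ range q, ((p-i-1+τ).choose τ : ℝ≥0∞) *
            (e (r+i) (n+a+b+3) * (e (p-i+τ) (n+b+2) * e (q-τ) (b+1))))
          + ∑ τ ∈ range (p-i), ((q-1+τ).choose τ : ℝ≥0∞) *
            (e (r+i) (n+a+b+3) * (e (q+τ) (n+b+2) * e (p-i-τ) (n+1))) := by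
      intro n a b
      rw [pf_e (p-i) q (by omega) hq (n+1) (b+1) (by omega) (by omega)]
      rw [show n+1+(b+1) = n+b+2 from by omega]
      rw [mul_add, Finset.mul_sum, Finset.mul_sum]
      congr 1
      · exact Finset.sum_congr rfl fun τ _ => by ring
      · exact Finset.sum_congr rfl fun τ _ => by ring
    rw [tsum_congr fun n => tsum_congr fun a => tsum_congr fun b => h2 n a b]
    rw [tsum3_add, tsum3_finsum, tsum3_finsum]
    congr 1
    · refine Finset.sum_congr rfl fun τ _ => ?_
      rw [tsum3_const_mul]
      congr 1
      rw [tsum3_swap12 fun n a b => e (r+i) (n+a+b+3) * (e (p-i+τ) (n+b+2) * e (q-τ) (b+1))]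
      refine tsum_congr fun a => tsum_congr fun n => tsum_congr fun b => ?_
      rw [show n+a+b+3 = a+n+b+3 from by omega]
    · refine Finset.sum_congr rfl fun τ _ => ?_
      rw [tsum3_const_mul]
      congr 1
      rw [tsum3_cycle fun n a b => e (r+i) (n+a+b+3) * (e (q+τ) (n+b+2) * e (p-i-τ) (n+1))]
      refine tsum_congr fun a => tsum_congr fun b => tsum_congr fun n => ?_
      rw [show n+a+b+3 = a+b+n+3 from by omega, show n+b+2 = b+n+2 from by omega]



lemma W_eq_Z3 (k₁ k₂ k₃ : ℕ) : W k₁ k₂ k₃ = Z3 k₁ k₂ k₃ := by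
  refine tsum_congr fun a => tsum_congr fun b => tsum_congr fun c => ?_
  simp only [e]
  push_cast
  ring

lemma W_ne_top (k₁ k₂ k₃ : ℕ) (h1 : 2 ≤ k₁) (h2 : 1 ≤ k₂) (h3 : 1 ≤ k₃) :
    W k₁ k₂ k₃ ≠ ∞ := by
  rw [W_eq_Z3]
  exact ne_top_of_le_ne_top (by norm_num) (Z3_le_two k₁ k₂ k₃ h1 h2 h3)

lemma Z2_ne_top (r q : ℕ) (hr : 2 ≤ r) (hq : 1 ≤ q) : Z2 r q ≠ ∞ :=
  ne_top_of_le_ne_top (by norm_num) (Z2_le_two r q hr hq)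

lemma zeta1_eq (p : ℕ) : zeta1 p = (Z1 p).toReal := by
  rw [Z1, ENNReal.tsum_toReal_eq (fun n => by
    rw [ENNReal.inv_ne_top]
    exact pow_ne_zero _ (by simp))]
  refine tsum_congr fun n => ?_
  rw [ENNReal.toReal_inv, ENNReal.toReal_pow]
  have : ((n:ℝ≥0∞)+1).toReal = (n:ℝ)+1 := by
    rw [show ((n:ℝ≥0∞)+1) = ((n+1:ℕ):ℝ≥0∞) from by push_cast; rfl, ENNReal.toReal_natCast]
    push_cast; ring
  rw [this, one_div]

lemma zeta2_eq (r q : ℕ) (h : Z2 r q ≠ ∞) : zeta2 r q = (Z2 r q).toReal := by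
  rw [Z2]
  rw [ENNReal.tsum_toReal_eq (fun a => ne_top_of_le_ne_top h (by rw [Z2]; exact ENNReal.le_tsum a))]
  refine tsum_congr fun a => ?_
  rw [ENNReal.tsum_toReal_eq (fun b => ENNReal.mul_ne_top
      (by rw [ENNReal.inv_ne_top]; exact pow_ne_zero _ (by simp)) (by rw [ENNReal.inv_ne_top]; exact pow_ne_zero _ (by simp)))]
  refine tsum_congr fun b => ?_
  rw [ENNReal.toReal_mul, ENNReal.toReal_inv, ENNReal.toReal_inv,
    ENNReal.toReal_pow, ENNReal.toReal_pow]
  have h1 : ((a:ℝ≥0∞)+(b:ℝ≥0∞)+2).toReal = (a:ℝ)+(b:ℝ)+2 := by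
    rw [show ((a:ℝ≥0∞)+(b:ℝ≥0∞)+2) = ((a+b+2:ℕ):ℝ≥0∞) from by push_cast; rfl,
      ENNReal.toReal_natCast]
    push_cast; ring
  have h2 : ((b:ℝ≥0∞)+1).toReal = (b:ℝ)+1 := by
    rw [show ((b:ℝ≥0∞)+1) = ((b+1:ℕ):ℝ≥0∞) from by push_cast; rfl, ENNReal.toReal_natCast]
    push_cast; ring
  rw [h1, h2, one_div, mul_inv]

lemma zeta3_eq (k₁ k₂ k₃ : ℕ) (h : W k₁ k₂ k₃ ≠ ∞) : zeta3 k₁ k₂ k₃ = (W k₁ k₂ k₃).toReal := by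
  have hin : ∀ a, (∑' (b:ℕ) (c:ℕ), e k₁ (a+b+c+3) * (e k₂ (b+c+2) * e k₃ (c+1))) ≠ ∞ :=
    fun a => ne_top_of_le_ne_top h (by rw [W]; exact ENNReal.le_tsum a)
  have hin2 : ∀ a b, (∑' (c:ℕ), e k₁ (a+b+c+3) * (e k₂ (b+c+2) * e k₃ (c+1))) ≠ ∞ :=
    fun a b => ne_top_of_le_ne_top (hin a) (ENNReal.le_tsum b)
  rw [zeta3, W]
  rw [ENNReal.tsum_toReal_eq hin]
  refine tsum_congr fun a => ?_
  rw [ENNReal.tsum_toReal_eq (hin2 a)]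
  refine tsum_congr fun b => ?_
  have hterm : ∀ c:ℕ, (e k₁ (a+b+c+3) * (e k₂ (b+c+2) * e k₃ (c+1))) ≠ ∞ := fun c => by
    simp only [e]
    exact ENNReal.mul_ne_top (by rw [ENNReal.inv_ne_top]; exact pow_ne_zero _ (by simp))
      (ENNReal.mul_ne_top (by rw [ENNReal.inv_ne_top]; exact pow_ne_zero _ (by simp))
        (by rw [ENNReal.inv_ne_top]; exact pow_ne_zero _ (by simp)))
  rw [ENNReal.tsum_toReal_eq hterm]
  refine tsum_congr fun c => ?_
  simp only [e]
  rw [ENNReal.toReal_mul, ENNReal.toReal_mul, ENNReal.toReal_inv, ENNReal.toReal_inv,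
    ENNReal.toReal_inv, ENNReal.toReal_pow, ENNReal.toReal_pow, ENNReal.toReal_pow,
    ENNReal.toReal_natCast, ENNReal.toReal_natCast, ENNReal.toReal_natCast]
  push_cast
  rw [one_div, mul_inv, mul_inv]
  ring

theorem shuffle_expansion_triple (p r q : ℕ) (hp : 2 ≤ p) (hr : 2 ≤ r) (hq : 1 ≤ q) :
    zeta1 p * zeta2 r q =
      (∑ i ∈ Finset.range r, (Nat.choose (p - 1 + i) i : ℝ) * zeta3 (p + i) (r - i) q) +
      (∑ i ∈ Finset.range p, (Nat.choose (r - 1 + i) i : ℝ) *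
        ((∑ τ ∈ Finset.range q, (Nat.choose (p - i - 1 + τ) τ : ℝ) *
            zeta3 (r + i) (p - i + τ) (q - τ)) +
         (∑ τ ∈ Finset.range (p - i), (Nat.choose (q - 1 + τ) τ : ℝ) *
            zeta3 (r + i) (q + τ) (p - i - τ)))) := by
  have hZ2 : Z2 r q ≠ ∞ := Z2_ne_top r q hr hq
  have hW1 : ∀ i ∈ range r, W (p+i) (r-i) q ≠ ∞ := fun i hi =>
    W_ne_top _ _ _ (by omega) (by have := Finset.mem_range.1 hi; omega) hq
  have hW2 : ∀ i ∈ range p, ∀ τ ∈ range q, W (r+i) (p-i+τ) (q-τ) ≠ ∞ := fun i hi τ hτ =>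
    W_ne_top _ _ _ (by omega) (by have := Finset.mem_range.1 hi; omega)
      (by have := Finset.mem_range.1 hτ; omega)
  have hW3 : ∀ i ∈ range p, ∀ τ ∈ range (p-i), W (r+i) (q+τ) (p-i-τ) ≠ ∞ := fun i hi τ hτ =>
    W_ne_top _ _ _ (by omega) (by omega) (by have := Finset.mem_range.1 hτ; omega)
  rw [zeta1_eq, zeta2_eq r q hZ2, ← ENNReal.toReal_mul, main_Z p r q hp hr hq]
  rw [ENNReal.toReal_add
    (by
      refine (ENNReal.sum_lt_top.2 fun i hi => ?_).ne
      exact ENNReal.mul_lt_top (ENNReal.natCast_lt_top _) (lt_top_iff_ne_top.2 (hW1 i hi)))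
    (by
      refine (ENNReal.sum_lt_top.2 fun i hi => ?_).ne
      refine ENNReal.mul_lt_top (ENNReal.natCast_lt_top _) ?_
      refine ENNReal.add_lt_top.2 ⟨?_, ?_⟩
      · exact ENNReal.sum_lt_top.2 fun τ hτ => ENNReal.mul_lt_top (ENNReal.natCast_lt_top _)
          (lt_top_iff_ne_top.2 (hW2 i hi τ hτ))
      · exact ENNReal.sum_lt_top.2 fun τ hτ => ENNReal.mul_lt_top (ENNReal.natCast_lt_top _)
          (lt_top_iff_ne_top.2 (hW3 i hi τ hτ)))]
  congr 1
  · rw [ENNReal.toReal_sum (fun i hi =>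
      ENNReal.mul_ne_top (ENNReal.natCast_ne_top _) (hW1 i hi))]
    refine Finset.sum_congr rfl fun i hi => ?_
    rw [ENNReal.toReal_mul, ENNReal.toReal_natCast,
      zeta3_eq _ _ _ (hW1 i hi)]
  · rw [ENNReal.toReal_sum (fun i hi => ENNReal.mul_ne_top (ENNReal.natCast_ne_top _)
      (by
        refine (ENNReal.add_lt_top.2 ⟨?_, ?_⟩).ne
        · exact ENNReal.sum_lt_top.2 fun τ hτ => ENNReal.mul_lt_top (ENNReal.natCast_lt_top _)
            (lt_top_iff_ne_top.2 (hW2 i hi τ hτ))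
        · exact ENNReal.sum_lt_top.2 fun τ hτ => ENNReal.mul_lt_top (ENNReal.natCast_lt_top _)
            (lt_top_iff_ne_top.2 (hW3 i hi τ hτ))))]
    refine Finset.sum_congr rfl fun i hi => ?_
    rw [ENNReal.toReal_mul, ENNReal.toReal_natCast]
    congr 1
    rw [ENNReal.toReal_add
      (by
        refine (ENNReal.sum_lt_top.2 fun τ hτ => ?_).ne
        exact ENNReal.mul_lt_top (ENNReal.natCast_lt_top _) (lt_top_iff_ne_top.2 (hW2 i hi τ hτ)))
      (by
        refine (ENNReal.sum_lt_top.2 fun τ hτ => ?_).ne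
        exact ENNReal.mul_lt_top (ENNReal.natCast_lt_top _) (lt_top_iff_ne_top.2 (hW3 i hi τ hτ)))]
    congr 1
    · rw [ENNReal.toReal_sum (fun τ hτ =>
        ENNReal.mul_ne_top (ENNReal.natCast_ne_top _) (hW2 i hi τ hτ))]
      refine Finset.sum_congr rfl fun τ hτ => ?_
      rw [ENNReal.toReal_mul, ENNReal.toReal_natCast, zeta3_eq _ _ _ (hW2 i hi τ hτ)]
    · rw [ENNReal.toReal_sum (fun τ hτ =>
        ENNReal.mul_ne_top (ENNReal.natCast_ne_top _) (hW3 i hi τ hτ))]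
      refine Finset.sum_congr rfl fun τ hτ => ?_
      rw [ENNReal.toReal_mul, ENNReal.toReal_natCast, zeta3_eq _ _ _ (hW3 i hi τ hτ)]
end
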